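/- Fix α > 0, C > 0, w > −1, set β = 3(1+w)/(2α), and let a(τ) = C · (sinh(βτ))^{2/(3(1+w))} for τ > 0. Define the total energy density ρ(τ) = (3/(8π)) · (a′(τ)/a(τ))². Then the holographic screen leaf area satisfies 3/(2ρ(τ)) = 4πα² · tanh²(βτ); this function of τ is strictly increasing on (0, ∞), tends to 0 as τ → 0⁺ (the big bang), and tends to 4πα² (the de Sitter horizon area) as τ → ∞. -/

import Mathlib

open Real

/-- The scale factor `a(τ) = C sinh(3(1+w)τ/(2α))^{2/(3(1+w))}` (eq. 21) of a flat FRW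
universe with vacuum energy and one matter species of equation of state `p = wρ`. -/
noncomputable def scaleFactor (α C w : ℝ) (τ : ℝ) : ℝ :=
  C * Real.sinh (3 * (1 + w) / (2 * α) * τ) ^ (2 / (3 * (1 + w)))

lemma tanh_sq_eq (x : ℝ) : Real.tanh x ^ 2 = 1 - 1 / Real.cosh x ^ 2 := by
  have hc : Real.cosh x ≠ 0 := (Real.cosh_pos x).ne'
  rw [Real.tanh_eq_sinh_div_cosh, div_pow, Real.sinh_sq]
  field_simp

lemma cosh_tendsto_atTop : Filter.Tendsto Real.cosh Filter.atTop Filter.atTop := by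
  apply Filter.tendsto_atTop_mono (f := fun x => Real.exp x / 2)
  · intro x
    rw [Real.cosh_eq]
    have := (Real.exp_pos (-x)).le
    linarith
  · exact Real.tendsto_exp_atTop.atTop_div_const two_pos

/-- With total energy density `ρ(τ) = (3/(8π))(a′/a)²`, the leaf area `3/(2ρ(τ))` (eq. 9)
equals `4πα² tanh²(βτ)`; this is strictly increasing on `(0,∞)`, tends to `0` at the big
bang `τ → 0⁺`, and tends to the de Sitter horizon area `4πα²` as `τ → ∞`. -/
theorem leaf_area_monotone_to_deSitter_horizon (α C w : ℝ)
    (hα : 0 < α) (hC : 0 < C) (hw : -1 < w)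
    (β : ℝ) (hβ : β = 3 * (1 + w) / (2 * α))
    (ρ : ℝ → ℝ)
    (hρ : ∀ τ, ρ τ = (3 / (8 * π)) *
      (deriv (scaleFactor α C w) τ / scaleFactor α C w τ) ^ 2)
    (A : ℝ → ℝ) (hA : ∀ τ, A τ = 4 * π * α ^ 2 * Real.tanh (β * τ) ^ 2) :
    (∀ τ > 0, 3 / (2 * ρ τ) = A τ) ∧
    StrictMonoOn A (Set.Ioi 0) ∧
    Filter.Tendsto A (nhdsWithin 0 (Set.Ioi 0)) (nhds 0) ∧
    Filter.Tendsto A Filter.atTop (nhds (4 * π * α ^ 2)) := by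
  have hw1 : (0:ℝ) < 1 + w := by linarith
  have hβpos : 0 < β := by
    rw [hβ]; positivity
  refine ⟨?_, ?_, ?_, ?_⟩
  · intro τ hτ
    set p : ℝ := 2 / (3 * (1 + w)) with hp
    have hppos : 0 < p := by positivity
    have hs : 0 < Real.sinh (β * τ) := Real.sinh_pos_iff.2 (by positivity)
    have hcosh : 0 < Real.cosh (β * τ) := Real.cosh_pos _
    -- derivative of scale factor
    have h1 : HasDerivAt (fun t => Real.sinh (β * t)) (Real.cosh (β * τ) * β) τ := by
      have := (Real.hasDerivAt_sinh (β * τ)).comp τ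
        ((hasDerivAt_id τ).const_mul β)
      simpa [Function.comp_def] using this
    have h2 : HasDerivAt (fun t => Real.sinh (β * t) ^ p)
        (p * Real.sinh (β * τ) ^ (p - 1) * (Real.cosh (β * τ) * β)) τ := by
      exact (Real.hasDerivAt_rpow_const (Or.inl hs.ne')).comp τ h1
    have hfun : scaleFactor α C w = fun t => C * Real.sinh (β * t) ^ p := by
      funext t; rw [scaleFactor, ← hβ, ← hp]
    have h3 : HasDerivAt (scaleFactor α C w)
        (C * (p * Real.sinh (β * τ) ^ (p - 1) * (Real.cosh (β * τ) * β))) τ := by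
      rw [hfun]; exact h2.const_mul C
    have hderiv := h3.deriv
    have hsp : (0:ℝ) < Real.sinh (β * τ) ^ p := Real.rpow_pos_of_pos hs p
    have hsub : Real.sinh (β * τ) ^ (p - 1) = Real.sinh (β * τ) ^ p / Real.sinh (β * τ) := by
      rw [Real.rpow_sub hs, Real.rpow_one]
    have haval : scaleFactor α C w τ = C * Real.sinh (β * τ) ^ p := by
      rw [hfun]
    have hratio : deriv (scaleFactor α C w) τ / scaleFactor α C w τ
        = (1 / α) * (Real.cosh (β * τ) / Real.sinh (β * τ)) := by
      have hpβ : p * β = 1 / α := by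
        rw [hp, hβ]
        field_simp
      have key : C * (p * (Real.sinh (β * τ) ^ p / Real.sinh (β * τ)) * (Real.cosh (β * τ) * β))
          / (C * Real.sinh (β * τ) ^ p)
          = (p * β) * (Real.cosh (β * τ) / Real.sinh (β * τ)) := by
        field_simp
      rw [hderiv, haval, hsub, key, hpβ]
    rw [hρ, hA, hratio, Real.tanh_eq_sinh_div_cosh]
    have hπ : (0:ℝ) < π := Real.pi_pos
    field_simp
    ring
  · intro x hx y hy hxy
    simp only [Set.mem_Ioi] at hx hy
    have hcx : 0 < Real.cosh (β * x) := Real.cosh_pos _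
    have hlt : Real.cosh (β * x) < Real.cosh (β * y) := by
      rw [Real.cosh_lt_cosh]
      rw [abs_of_pos (by positivity), abs_of_pos (by positivity)]
      exact (mul_lt_mul_iff_right₀ hβpos).2 hxy
    have hsq : Real.cosh (β * x) ^ 2 < Real.cosh (β * y) ^ 2 := by
      exact pow_lt_pow_left₀ hlt hcx.le two_ne_zero
    have hinv : 1 / Real.cosh (β * y) ^ 2 < 1 / Real.cosh (β * x) ^ 2 :=
      one_div_lt_one_div_of_lt (by positivity) hsq
    rw [hA, hA, tanh_sq_eq, tanh_sq_eq]
    have hπ : (0:ℝ) < π := Real.pi_pos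
    have h4 : (0:ℝ) < 4 * π * α ^ 2 := by positivity
    exact (mul_lt_mul_iff_right₀ h4).2 (by linarith)
  · have hcont : Continuous A := by
      have htanh : Continuous Real.tanh := by
        have : Real.tanh = fun x => Real.sinh x / Real.cosh x := by
          funext x; exact Real.tanh_eq_sinh_div_cosh x
        rw [this]
        exact Real.continuous_sinh.div Real.continuous_cosh fun x => (Real.cosh_pos x).ne'
      have : Continuous fun τ => 4 * π * α ^ 2 * Real.tanh (β * τ) ^ 2 :=
        continuous_const.mul ((htanh.comp (continuous_const.mul continuous_id)).pow 2)
      have hAe : A = fun τ => 4 * π * α ^ 2 * Real.tanh (β * τ) ^ 2 := funext hA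
      rwa [hAe]
    have h0 : A 0 = 0 := by simp [hA]
    have := hcont.continuousAt (x := (0:ℝ)).tendsto
    rw [h0] at this
    exact this.mono_left nhdsWithin_le_nhds
  · have hAe : A = fun τ => 4 * π * α ^ 2 * (1 - 1 / Real.cosh (β * τ) ^ 2) := by
      funext τ; rw [hA, tanh_sq_eq]
    rw [hAe]
    have hβt : Filter.Tendsto (fun τ : ℝ => β * τ) Filter.atTop Filter.atTop :=
      Filter.tendsto_id.const_mul_atTop hβpos
    have hcosh := cosh_tendsto_atTop.comp hβt
    have hsq : Filter.Tendsto (fun τ : ℝ => Real.cosh (β * τ) ^ 2) Filter.atTop Filter.atTop :=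
      (Filter.tendsto_pow_atTop two_ne_zero).comp hcosh
    have hinv : Filter.Tendsto (fun τ : ℝ => 1 / Real.cosh (β * τ) ^ 2)
        Filter.atTop (nhds 0) := by
      simpa [one_div, Pi.inv_def] using hsq.inv_tendsto_atTop
    have : Filter.Tendsto (fun τ : ℝ => 4 * π * α ^ 2 * (1 - 1 / Real.cosh (β * τ) ^ 2))
        Filter.atTop (nhds (4 * π * α ^ 2 * (1 - 0))) :=
      (tendsto_const_nhds.sub hinv).const_mul _
    simpa using this
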